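/- arXiv:1404.3593 — 3 statements merged into one kernel-verified Lean document; each statement's English description precedes it below -/
import Mathlib

section
/- Let v ∈ (ℂ*)^n, and let g_0, g_1, …, g_n be the n+1 affine polynomials associated to v (namely g_0(z) = 1 − (1/‖v‖_0) ∑_k (|v_k|/v_k) z_k and g_j(z) = 1 − ((1+‖v‖_0−|v_j|)/v_j) z_j + ∑_{k≠j} (|v_k|/v_k) z_k for 1 ≤ j ≤ n, where ‖v‖_0 = ∑_k |v_k|). If w ∈ ℝ^n lies in the amoeba of g_j for every j = 0, 1, …, n, then w = Log(v), i.e., w_k = log|v_k| for all k. -/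
open Finset

/-- The coordinatewise log-modulus map. -/
noncomputable def Log {n : ℕ} (z : Fin n → ℂ) : Fin n → ℝ :=
  fun k => Real.log (‖z k‖)

/-- The amoeba of a polynomial function on the complex torus:
the image under `Log` of its zero set in `(ℂ*)^n`. -/
noncomputable def amoeba {n : ℕ} (f : (Fin n → ℂ) → ℂ) : Set (Fin n → ℝ) :=
  Log '' {z | (∀ k, z k ≠ 0) ∧ f z = 0}

/-- `‖v‖₀ = ∑ₖ |vₖ|`. -/
noncomputable def norm0 {n : ℕ} (v : Fin n → ℂ) : ℝ := ∑ k, ‖v k‖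

/-- `g₀(z) = 1 - (1/‖v‖₀) ∑ₖ (|vₖ|/vₖ) zₖ`, the polynomial of Nisse's construction. -/
noncomputable def gzero {n : ℕ} (v : Fin n → ℂ) : (Fin n → ℂ) → ℂ :=
  fun z => 1 - (1 / (norm0 v : ℂ)) * ∑ k, ((‖v k‖ : ℂ) / v k) * z k

/-- `gⱼ(z) = 1 - ((1+‖v‖₀-|vⱼ|)/vⱼ) zⱼ + ∑_{k≠j} (|vₖ|/vₖ) zₖ`, for `1 ≤ j ≤ n`. -/
noncomputable def gj {n : ℕ} (v : Fin n → ℂ) (j : Fin n) : (Fin n → ℂ) → ℂ :=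
  fun z => 1 - (((1 + norm0 v - ‖v j‖ : ℝ) : ℂ) / v j) * z j
    + ∑ k ∈ Finset.univ.erase j, ((‖v k‖ : ℂ) / v k) * z k

/-- The family `g₀, g₁, …, gₙ` of the `n+1` affine polynomials associated to `v`. -/
noncomputable def gfam {n : ℕ} (v : Fin n → ℂ) : Fin (n + 1) → (Fin n → ℂ) → ℂ :=
  Fin.cases (gzero v) (gj v)

theorem mem_all_amoebas_eq_Log {n : ℕ} (v : Fin n → ℂ) (hv : ∀ k, v k ≠ 0)
    (w : Fin n → ℝ) (hw : ∀ j : Fin (n + 1), w ∈ amoeba (gfam v j)) :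
    w = Log v := by
  have hb : ∀ k, 0 < ‖v k‖ := fun k => norm_pos_iff.mpr (hv k)
  have ha : ∀ k, 0 < Real.exp (w k) := fun k => Real.exp_pos _
  have key : ∀ (z : Fin n → ℂ), (∀ k, z k ≠ 0) → Log z = w →
      ∀ k, ‖((‖v k‖ : ℂ) / v k) * z k‖ = Real.exp (w k) := by
    intro z hz hLog k
    have h1 : ‖z k‖ = Real.exp (w k) := by
      have h2 := congrFun hLog k
      simp only [Log] at h2
      rw [← h2, Real.exp_log (norm_pos_iff.mpr (hz k))]
    rw [norm_mul, norm_div, Complex.norm_real, Real.norm_eq_abs, abs_of_pos (hb k), div_self (hb k).ne',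
      one_mul, h1]
  funext j
  have hbB : ∀ k, ‖v k‖ ≤ norm0 v := fun k =>
    Finset.single_le_sum (fun k _ => (hb k).le) (Finset.mem_univ k)
  have hBpos : 0 < norm0 v := lt_of_lt_of_le (hb j) (hbB j)
  have haS : ∀ k, Real.exp (w k) ≤ ∑ k, Real.exp (w k) := fun k =>
    Finset.single_le_sum (fun k _ => (ha k).le) (Finset.mem_univ k)
  -- Step 1: B ≤ S
  have hBS : norm0 v ≤ ∑ k, Real.exp (w k) := by
    obtain ⟨z, ⟨hzne, hz0⟩, hzw⟩ := hw 0
    have hz0' : gzero v z = 0 := hz0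
    simp only [gzero] at hz0'
    have hB0 : (norm0 v : ℂ) ≠ 0 := by exact_mod_cast hBpos.ne'
    have hT : (∑ k, ((‖v k‖ : ℂ) / v k) * z k) = (norm0 v : ℂ) := by
      field_simp at hz0'
      have hsum : (∑ x, (‖v x‖ : ℂ) * z x / v x)
          = ∑ k, ((‖v k‖ : ℂ) / v k) * z k :=
        Finset.sum_congr rfl fun k _ => by ring
      rw [hsum] at hz0'
      linear_combination -hz0'
    calc norm0 v = ‖∑ k, ((‖v k‖ : ℂ) / v k) * z k‖ := by
          rw [hT, Complex.norm_real, Real.norm_eq_abs, abs_of_pos hBpos]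
      _ ≤ ∑ k, ‖((‖v k‖ : ℂ) / v k) * z k‖ :=
          norm_sum_le _ _
      _ = ∑ k, Real.exp (w k) := Finset.sum_congr rfl fun k _ => key z hzne hzw k
  -- Step 2: per-index inequality
  have hIneq : ∀ i : Fin n,
      (1 + norm0 v) * Real.exp (w i) ≤ ‖v i‖ * (1 + ∑ k, Real.exp (w k)) := by
    intro i
    obtain ⟨z, ⟨hzne, hz0⟩, hzw⟩ := hw i.succ
    have hz0' : gj v i z = 0 := by
      have : gfam v i.succ = gj v i := by simp [gfam]
      rwa [this] at hz0
    simp only [gj] at hz0'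
    have heq : (((1 + norm0 v - ‖v i‖ : ℝ) : ℂ) / v i) * z i
        = 1 + ∑ k ∈ Finset.univ.erase i, ((‖v k‖ : ℂ) / v k) * z k := by
      linear_combination -hz0'
    have habs := congrArg norm heq
    have hL : ‖(((1 + norm0 v - ‖v i‖ : ℝ) : ℂ) / v i) * z i‖
        = (1 + norm0 v - ‖v i‖) / ‖v i‖ * Real.exp (w i) := by
      rw [norm_mul, norm_div, Complex.norm_real, Real.norm_eq_abs,
        abs_of_nonneg (by linarith [hbB i] : (0:ℝ) ≤ 1 + norm0 v - ‖v i‖)]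
      congr 1
      have h2 := congrFun hzw i
      simp only [Log] at h2
      rw [← h2, Real.exp_log (norm_pos_iff.mpr (hzne i))]
    have hR : ‖1 + ∑ k ∈ Finset.univ.erase i, ((‖v k‖ : ℂ) / v k) * z k‖
        ≤ 1 + ((∑ k, Real.exp (w k)) - Real.exp (w i)) := by
      calc ‖1 + ∑ k ∈ Finset.univ.erase i, ((‖v k‖ : ℂ) / v k) * z k‖
          ≤ ‖(1:ℂ)‖ + ‖∑ k ∈ Finset.univ.erase i,
              ((‖v k‖ : ℂ) / v k) * z k‖ := norm_add_le _ _
        _ ≤ 1 + ∑ k ∈ Finset.univ.erase i,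
              ‖((‖v k‖ : ℂ) / v k) * z k‖ := by
            rw [show ‖(1:ℂ)‖ = 1 from norm_one]; exact add_le_add le_rfl (norm_sum_le (Finset.univ.erase i) (fun k => ((‖v k‖ : ℂ) / v k) * z k))
        _ = 1 + ∑ k ∈ Finset.univ.erase i, Real.exp (w k) := by
            rw [Finset.sum_congr rfl fun k _ => key z hzne hzw k]
        _ = 1 + ((∑ k, Real.exp (w k)) - Real.exp (w i)) := by
            rw [Finset.sum_erase_eq_sub (Finset.mem_univ i)]
    rw [hL] at habs
    rw [← habs] at hR
    have hdiv : (1 + norm0 v - ‖v i‖) * Real.exp (w i)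
        ≤ ‖v i‖ * (1 + ((∑ k, Real.exp (w k)) - Real.exp (w i))) := by
      rw [div_mul_eq_mul_div, div_le_iff₀ (hb i)] at hR
      linarith [hR]
    nlinarith [hb i, ha i]
  -- Step 3: S ≤ B
  have hSB : (∑ k, Real.exp (w k)) ≤ norm0 v := by
    have hsum := Finset.sum_le_sum (s := Finset.univ) (fun i _ => hIneq i)
    rw [← Finset.mul_sum, ← Finset.sum_mul] at hsum
    have : norm0 v = ∑ k, ‖v k‖ := rfl
    rw [← this] at hsum
    nlinarith [hsum]
  have hS : (∑ k, Real.exp (w k)) = norm0 v := le_antisymm hSB hBS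
  -- Step 4: termwise equality
  have hzero : ∀ i ∈ Finset.univ, (‖v i‖ * (1 + ∑ k, Real.exp (w k))
      - (1 + norm0 v) * Real.exp (w i)) = 0 := by
    rw [← Finset.sum_eq_zero_iff_of_nonneg (fun i _ => by linarith [hIneq i])]
    rw [Finset.sum_sub_distrib, ← Finset.sum_mul, ← Finset.mul_sum]
    have : (∑ k, ‖v k‖) = norm0 v := rfl
    rw [this, hS]
    ring
  have hj := hzero j (Finset.mem_univ j)
  rw [hS] at hj
  have haj : Real.exp (w j) = ‖v j‖ := by nlinarith [hBpos]
  show w j = Real.log (‖v j‖)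
  rw [← haj, Real.log_exp]
end

section
/- Let v ∈ (ℂ*)^n and let g_0, …, g_n be the n+1 affine polynomials associated to v as in Nisse's construction. If w ∈ ℝ^n and w ≠ Log(v), then there exists j ∈ {0, 1, …, n} such that w does not lie in the amoeba of g_j. -/
open Finset

theorem exists_amoeba_avoiding {n : ℕ} (v : Fin n → ℂ) (hv : ∀ k, v k ≠ 0)
    (w : Fin n → ℝ) (hw : w ≠ Log v) :
    ∃ j : Fin (n + 1), w ∉ amoeba (gfam v j) := by
  by_contra hcon
  push_neg at hcon
  apply hw
  rcases Nat.eq_zero_or_pos n with hn | hn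
  · subst hn; exact funext fun i => i.elim0
  set N : ℝ := norm0 v with hN
  have hNpos : 0 < N := Finset.sum_pos (fun k _ => norm_pos_iff.mpr (hv k))
    ⟨⟨0, hn⟩, Finset.mem_univ _⟩
  set s : ℝ := ∑ k, Real.exp (w k) with hs
  have key : ∀ f, w ∈ amoeba f →
      ∃ z : Fin n → ℂ, f z = 0 ∧ ∀ k, ‖z k‖ = Real.exp (w k) := by
    rintro f ⟨z, ⟨hzne, hfz⟩, hlog⟩
    refine ⟨z, hfz, fun k => ?_⟩
    have h1 : Real.log (‖z k‖) = w k := congrFun hlog k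
    rw [← h1, Real.exp_log (norm_pos_iff.mpr (hzne k))]
  -- Step A : N ≤ s
  obtain ⟨z0, hz0, habs0⟩ := key _ (hcon 0)
  simp only [gfam, Fin.cases_zero, gzero, ← hN] at hz0
  have hNne : (N : ℂ) ≠ 0 := by exact_mod_cast hNpos.ne'
  have hS : ∑ k, ((‖v k‖ : ℂ) / v k) * z0 k = (N : ℂ) := by
    have h1 : (1 : ℂ) = (1 / (N:ℂ)) * ∑ k, ((‖v k‖ : ℂ) / v k) * z0 k :=
      sub_eq_zero.mp hz0
    field_simp at h1
    rw [h1]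
    exact Finset.sum_congr rfl fun k _ => div_mul_eq_mul_div _ _ _
  have hA : N ≤ s := by
    have h2 : ‖(N : ℂ)‖ ≤ s := by
      rw [← hS]
      calc ‖∑ k, ((‖v k‖ : ℂ) / v k) * z0 k‖
          ≤ ∑ k, ‖((‖v k‖ : ℂ) / v k) * z0 k‖ :=
            norm_sum_le _ _
        _ = s := by
            rw [hs]
            refine Finset.sum_congr rfl fun k _ => ?_
            rw [norm_mul, norm_div, Complex.norm_real, Real.norm_eq_abs,
              abs_of_nonneg (norm_nonneg _),
              div_self (norm_ne_zero_iff.mpr (hv k)), one_mul, habs0]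
    rwa [Complex.norm_real, Real.norm_eq_abs, abs_of_pos hNpos] at h2
  -- Step B
  have hB : ∀ j : Fin n, (1 + N) * Real.exp (w j) ≤ ‖v j‖ * (1 + s) := by
    intro j
    obtain ⟨z, hz, habs⟩ := key _ (hcon j.succ)
    simp only [gfam, Fin.cases_succ, gj, ← hN] at hz
    have hvj : 0 < ‖v j‖ := norm_pos_iff.mpr (hv j)
    have haN : ‖v j‖ ≤ N := by
      rw [hN, norm0]
      exact Finset.single_le_sum (f := fun k => ‖v k‖)
        (fun k _ => norm_nonneg _) (Finset.mem_univ j)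
    have heq : (((1 + N - ‖v j‖ : ℝ) : ℂ) / v j) * z j
        = 1 + ∑ k ∈ Finset.univ.erase j, ((‖v k‖ : ℂ) / v k) * z k := by
      linear_combination -hz
    have hlhs : ‖(((1 + N - ‖v j‖ : ℝ) : ℂ) / v j) * z j‖
        = (1 + N - ‖v j‖) / ‖v j‖ * Real.exp (w j) := by
      rw [norm_mul, norm_div, Complex.norm_real, Real.norm_eq_abs, abs_of_nonneg (by linarith), habs]
    have hrhs : ‖(1 : ℂ) + ∑ k ∈ Finset.univ.erase j,
        ((‖v k‖ : ℂ) / v k) * z k‖ ≤ 1 + (s - Real.exp (w j)) := by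
      calc ‖(1 : ℂ) + ∑ k ∈ Finset.univ.erase j,
            ((‖v k‖ : ℂ) / v k) * z k‖
          ≤ 1 + ‖∑ k ∈ Finset.univ.erase j,
            ((‖v k‖ : ℂ) / v k) * z k‖ := by
            simpa using norm_add_le (1:ℂ) _
        _ ≤ 1 + ∑ k ∈ Finset.univ.erase j,
            ‖((‖v k‖ : ℂ) / v k) * z k‖ := by
            gcongr
            exact norm_sum_le _ _
        _ = 1 + (s - Real.exp (w j)) := by
            congr 1
            have : ∀ k ∈ Finset.univ.erase j,
                ‖((‖v k‖ : ℂ) / v k) * z k‖ = Real.exp (w k) := by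
              intro k _
              rw [norm_mul, norm_div, Complex.norm_real, Real.norm_eq_abs,
                abs_of_nonneg (norm_nonneg _),
                div_self (norm_ne_zero_iff.mpr (hv k)), one_mul, habs]
            rw [Finset.sum_congr rfl this, hs,
              Finset.sum_erase_eq_sub (Finset.mem_univ j)]
    have hineq : (1 + N - ‖v j‖) / ‖v j‖ * Real.exp (w j)
        ≤ 1 + (s - Real.exp (w j)) := by rw [← hlhs, heq]; exact hrhs
    rw [div_mul_eq_mul_div, div_le_iff₀ hvj] at hineq
    nlinarith [Real.exp_pos (w j)]
  -- Step C : s = N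
  have hC : (1 + N) * s ≤ N * (1 + s) := by
    have hNsum : N = ∑ i, ‖v i‖ := hN
    have h3 := Finset.sum_le_sum (fun j (_ : j ∈ Finset.univ) => hB j)
    rwa [← Finset.mul_sum, ← Finset.sum_mul, ← hs, ← hNsum] at h3
  have hsN : s = N := by nlinarith
  -- Step D : each coordinate
  have hEq : ∑ j, (1 + N) * Real.exp (w j) = ∑ j, ‖v j‖ * (1 + s) := by
    have hNsum : N = ∑ i, ‖v i‖ := hN
    rw [← Finset.mul_sum, ← Finset.sum_mul, ← hs, ← hNsum, hsN]; ring
  have heach := (Finset.sum_eq_sum_iff_of_le (fun j _ => hB j)).mp hEq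
  funext j
  have h4 := heach j (Finset.mem_univ j)
  have h5 : Real.exp (w j) = ‖v j‖ := by
    have h1N : (0:ℝ) < 1 + N := by linarith
    rw [hsN] at h4
    nlinarith
  show w j = Real.log (‖v j‖)
  rw [← h5, Real.log_exp]
end

section
/- Let v ∈ (ℂ*)^n. If z ∈ (ℂ*)^n satisfies |z_k| = |v_k| for all k and lies in the zero sets of all n+1 polynomials g_0, …, g_n associated to v, then z = v. -/
open Finset

theorem torus_fiber_rigidity {n : ℕ} (v : Fin n → ℂ) (hv : ∀ k, v k ≠ 0)
    (z : Fin n → ℂ) (hz : ∀ k, z k ≠ 0)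
    (habs : ∀ k, ‖z k‖ = ‖v k‖)
    (hzero : ∀ j : Fin (n + 1), gfam v j z = 0) :
    z = v := by
  have h0 : gzero v z = 0 := by simpa [gfam] using hzero 0
  funext j
  have hvabs : ∀ k, (0:ℝ) < ‖v k‖ := fun k => norm_pos_iff.mpr (hv k)
  have hNpos : 0 < norm0 v := by
    have h1 : ‖v j‖ ≤ norm0 v :=
      Finset.single_le_sum (fun k _ => (hvabs k).le) (Finset.mem_univ j)
    linarith [hvabs j]
  -- the terms
  set t : Fin n → ℂ := fun k => ((‖v k‖ : ℂ) / v k) * z k with ht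
  have habst : ∀ k, ‖t k‖ = ‖v k‖ := by
    intro k
    simp [ht, norm_mul, norm_div, Complex.norm_real, abs_of_pos (hvabs k), habs k,
      div_mul_eq_mul_div, mul_div_assoc]
    field_simp
  have hS : ∑ k, t k = (norm0 v : ℂ) := by
    have hN0 : (norm0 v : ℂ) ≠ 0 := by
      exact_mod_cast Complex.ofReal_ne_zero.mpr hNpos.ne'
    have := h0
    simp only [gzero, sub_eq_zero] at this
    field_simp at this
    simp only [ht, div_mul_eq_mul_div]
    exact this.symm
  have hreS : ∑ k, (t k).re = norm0 v := by
    have := congrArg Complex.re hS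
    simpa [Complex.re_sum] using this
  have hle : ∀ k, (t k).re ≤ ‖v k‖ := fun k =>
    (Complex.re_le_norm (t k)).trans_eq (habst k)
  have hzero' : ∀ k ∈ Finset.univ, ‖v k‖ - (t k).re = 0 := by
    rw [← Finset.sum_eq_zero_iff_of_nonneg (fun k _ => sub_nonneg.mpr (hle k))]
    simp [Finset.sum_sub_distrib, hreS, norm0]
  have hrej : (t j).re = ‖v j‖ := by
    have := hzero' j (Finset.mem_univ j)
    linarith
  have himj : (t j).im = 0 := by
    have hsq : (t j).re ^ 2 + (t j).im ^ 2 = ‖t j‖ ^ 2 := by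
      rw [Complex.sq_norm, Complex.normSq_apply]; ring
    rw [habst j, hrej] at hsq
    nlinarith [sq_nonneg (t j).im]
  have htj : t j = (‖v j‖ : ℂ) := by
    apply Complex.ext <;> simp [hrej, himj]
  have habsj : (‖v j‖ : ℂ) ≠ 0 := by
    exact_mod_cast Complex.ofReal_ne_zero.mpr (hvabs j).ne'
  have : ((‖v j‖ : ℂ) / v j) * z j = (‖v j‖ : ℂ) := htj
  rw [div_mul_eq_mul_div, div_eq_iff (hv j)] at this
  exact mul_left_cancel₀ habsj this
end
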